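/- If L ⊆ Γ^∞ is strongly recognized by a surjective homomorphism h : Γ* → M with M ∈ DA, then L is clopen in the strict alphabetic topology. -/

import Mathlib

namespace InfWords

variable {Γ : Type}

/-- Finite and infinite words over `Γ`: `Γ^∞ = Γ* ∪ Γ^ω`. -/
abbrev Word (Γ : Type) := List Γ ⊕ (ℕ → Γ)

/-- Prepend a finite word to a finite or infinite word. -/
def wappend (u : List Γ) : Word Γ → Word Γ
  | Sum.inl v => Sum.inl (u ++ v)
  | Sum.inr f => Sum.inr fun n => if h : n < u.length then u.get ⟨n, h⟩ else f (n - u.length)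

/-- The set of finite words `Γ*` inside `Γ^∞`. -/
def finWords (Γ : Type) : Set (Word Γ) := Set.range Sum.inl

/-- The set of infinite words `Γ^ω` inside `Γ^∞`. -/
def infWords (Γ : Type) : Set (Word Γ) := Set.range Sum.inr

/-- The alphabet of a word: the letters occurring in it. -/
def alph : Word Γ → Set Γ
  | Sum.inl u => {a | a ∈ u}
  | Sum.inr f => {a | ∃ n, f n = a}

/-- The imaginary part: letters occurring infinitely often. -/
def im : Word Γ → Set Γ
  | Sum.inl _ => ∅
  | Sum.inr f => {a | ∀ n, ∃ m, n ≤ m ∧ f m = a}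

/-- `A^∞`: words all of whose letters lie in `A`. -/
def infin (A : Set Γ) : Set (Word Γ) := {α | alph α ⊆ A}

/-- The basic set `u A^∞` of the alphabetic topology. -/
def cone (u : List Γ) (A : Set Γ) : Set (Word Γ) := wappend u '' infin A

/-- The alphabetic topology on `Γ^∞`, generated by the sets `u A^∞`. -/
instance alphTop : TopologicalSpace (Word Γ) :=
  TopologicalSpace.generateFrom {S | ∃ u A, S = cone u A}

/-- `cpx A`: words with `alph = im = A`. -/
def cpx (A : Set Γ) : Set (Word Γ) := {β | alph β = A ∧ im β = A}

/-- The strict alphabetic topology, generated by the sets `u · cpx A`. -/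
def strictTopo (Γ : Type) : TopologicalSpace (Word Γ) :=
  TopologicalSpace.generateFrom {S | ∃ u A, S = wappend u '' cpx A}

/-- `u` is a finite prefix of the word `α`. -/
def IsPre (u : List Γ) : Word Γ → Prop
  | Sum.inl v => u <+: v
  | Sum.inr f => ∀ i : Fin u.length, u.get i = f i.1

/-- The arrow language `→W`: every prefix extends to a prefix lying in `W`. -/
def arrow (W : Set (List Γ)) : Set (Word Γ) :=
  {α | ∀ u, IsPre u α → ∃ v, IsPre (u ++ v) α ∧ u ++ v ∈ W}

/-- The right quotient `L / A^∞`. -/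
def quotInf (L : Set (Word Γ)) (A : Set Γ) : Set (List Γ) :=
  {u | ∃ β ∈ infin A, wappend u β ∈ L}

/-- `A^im`: words whose set of letters occurring infinitely often is exactly `A`. -/
def imSet (A : Set Γ) : Set (Word Γ) := {α | im α = A}

/-- `z^ω`, with the convention `1^ω = 1`. -/
def omegaPow : List Γ → Word Γ
  | [] => Sum.inl []
  | a :: l => Sum.inr fun n => (a :: l).get ⟨n % (a :: l).length, Nat.mod_lt n (Nat.succ_pos _)⟩

/-- The partial products `u v₀ v₁ ⋯ v_{n-1}`. -/
def partialProd (u : List Γ) (v : ℕ → List Γ) (n : ℕ) : List Γ :=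
  u ++ ((List.range n).map v).flatten

/-- `α` is the (finite or infinite) product `u v₀ v₁ v₂ ⋯`, with convention `1^ω = 1`. -/
def IsInfProd (u : List Γ) (v : ℕ → List Γ) : Word Γ → Prop
  | Sum.inl w => (∀ n, partialProd u v n <+: w) ∧ ∃ n, partialProd u v n = w
  | Sum.inr f => (∀ n, IsPre (partialProd u v n) (Sum.inr f)) ∧
      ∀ k, ∃ n, k < (partialProd u v n).length

/-- `h : Γ* → M` is a monoid homomorphism. -/
structure IsHom {M : Type} [Monoid M] (h : List Γ → M) : Prop where
  map_one : h [] = 1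
  map_mul : ∀ u v, h (u ++ v) = h u * h v

/-- `[s][e]^ω`: products `u v₀ v₁ ⋯` with `h u = s` and `h vᵢ = e`. -/
def pairSet {M : Type} (h : List Γ → M) (s e : M) : Set (Word Γ) :=
  {α | ∃ u v, h u = s ∧ (∀ i, h (v i) = e) ∧ IsInfProd u v α}

/-- `(s, e)` is a linked pair. -/
def LinkedPair {M : Type} [Monoid M] (s e : M) : Prop := s * e = s ∧ e * e = e

/-- `h` strongly recognizes `L`. -/
def StronglyRecognizes {M : Type} [Monoid M] (h : List Γ → M) (L : Set (Word Γ)) : Prop :=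
  L = ⋃ (s : M) (e : M) (_ : LinkedPair s e ∧ (pairSet h s e ∩ L).Nonempty), pairSet h s e

/-- `L` is regular: strongly recognized by a surjective homomorphism onto a finite monoid. -/
def Regular (L : Set (Word Γ)) : Prop :=
  ∃ (M : Type) (i : Monoid M), Finite M ∧
    ∃ h : List Γ → M, @IsHom Γ M i h ∧ Function.Surjective h ∧ @StronglyRecognizes Γ M i h L

/-- `L` is deterministic. -/
def Deterministic (L : Set (Word Γ)) : Prop :=
  Regular L ∧ ∃ W : Set (List Γ), L ∩ infWords Γ = arrow W ∩ infWords Γ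

/-- The syntactic preorder `u ≤_L v`. -/
def synLe (L : Set (Word Γ)) (u v : List Γ) : Prop :=
  ∀ x y z : List Γ,
    (wappend (x ++ v ++ y) (omegaPow z) ∈ L → wappend (x ++ u ++ y) (omegaPow z) ∈ L) ∧
    (wappend x (omegaPow (v ++ y)) ∈ L → wappend x (omegaPow (u ++ y)) ∈ L)

/-- The syntactic congruence `u ≡_L v`. -/
def synEq (L : Set (Word Γ)) (u v : List Γ) : Prop := synLe L u v ∧ synLe L v u

/-- `[s][e]^ω` for syntactic classes represented by words `s`, `e`. -/
def pairSetSyn (L : Set (Word Γ)) (s e : List Γ) : Set (Word Γ) :=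
  {α | ∃ u v, synEq L u s ∧ (∀ i, synEq L (v i) e) ∧ IsInfProd u v α}

/-- `s` represents an element of `M_e` in the syntactic monoid of `L`:
`s` is a product of words each of which is a factor of (something equivalent to) `e`. -/
def InMe (L : Set (Word Γ)) (e s : List Γ) : Prop :=
  ∃ parts : List (List Γ), s = parts.flatten ∧ ∀ p ∈ parts, ∃ x y, synEq L (x ++ p ++ y) e

/-- Glue a factorization `u₁ a₁ u₂ a₂ ⋯ u_k a_k` into a single finite word. -/
def glue : List (List Γ) → List (Set Γ × Γ) → List Γ
  | x :: xs, p :: l => x ++ p.2 :: glue xs l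
  | _, _ => []

/-- `(us, β)` is a factorization of `α` as `u₁ a₁ ⋯ u_k a_k β` with `uᵢ ∈ Aᵢ*`, `β ∈ B^∞`. -/
def IsFactorization (l : List (Set Γ × Γ)) (B : Set Γ) (us : List (List Γ)) (β : Word Γ)
    (α : Word Γ) : Prop :=
  us.length = l.length ∧
  (∀ (i : ℕ) (h1 : i < us.length) (h2 : i < l.length),
    ∀ c ∈ us.get ⟨i, h1⟩, c ∈ (l.get ⟨i, h2⟩).1) ∧
  β ∈ infin B ∧ α = wappend (glue us l) β

/-- The monomial `A₁* a₁ ⋯ A_k* a_k B^∞`. -/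
def monomial (l : List (Set Γ × Γ)) (B : Set Γ) : Set (Word Γ) :=
  {α | ∃ us β, IsFactorization l B us β α}

/-- The monomial given by `(l, B)` is unambiguous. -/
def Unambiguous (l : List (Set Γ × Γ)) (B : Set Γ) : Prop :=
  ∀ α us β us' β', IsFactorization l B us β α → IsFactorization l B us' β' α →
    us = us' ∧ β = β'

/-- `L` is a polynomial: a finite union of monomials. -/
def IsPolynomial (L : Set (Word Γ)) : Prop :=
  ∃ ms : List (List (Set Γ × Γ) × Set Γ), L = {α | ∃ m ∈ ms, α ∈ monomial m.1 m.2}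

/-- The set of marker letters of a monomial. -/
def sndSet (l : List (Set Γ × Γ)) : Set Γ := {a | ∃ p ∈ l, p.2 = a}

/-- `M_e`: the submonoid generated by the factors of the idempotent `e`. -/
def Msub {M : Type} [Monoid M] (e : M) : Submonoid M :=
  Submonoid.closure {t | ∃ x y, x * t * y = e}

/-- The variety `DA`: `ese = e` for all idempotents `e` and all `s ∈ M_e`. -/
def IsDA (M : Type) [Monoid M] : Prop :=
  ∀ e : M, e * e = e → ∀ s ∈ Msub e, e * s * e = e

end InfWords


namespace DAProof

variable {Γ : Type}

/-- segment of an infinite word: positions `a ≤ i < b`. -/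
def seg (G : ℕ → Γ) (a b : ℕ) : List Γ := (List.range (b - a)).map fun i => G (a + i)

def pref (G : ℕ → Γ) (m : ℕ) : List Γ := (List.range m).map G

@[simp] lemma seg_length (G : ℕ → Γ) (a b : ℕ) : (seg G a b).length = b - a := by
  simp [seg]

@[simp] lemma pref_length (G : ℕ → Γ) (m : ℕ) : (pref G m).length = m := by
  simp [pref]

@[simp] lemma pref_getElem (G : ℕ → Γ) (m i : ℕ) (hi : i < (pref G m).length) :
    (pref G m)[i] = G i := by
  simp [pref]

@[simp] lemma seg_getElem (G : ℕ → Γ) (a b i : ℕ) (hi : i < (seg G a b).length) :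
    (seg G a b)[i] = G (a + i) := by
  simp [seg]

lemma pref_eq_seg (G : ℕ → Γ) (m : ℕ) : pref G m = seg G 0 m := by
  simp [pref, seg]

lemma seg_append (G : ℕ → Γ) {a b c : ℕ} (hab : a ≤ b) (hbc : b ≤ c) :
    seg G a b ++ seg G b c = seg G a c := by
  apply List.ext_getElem
  · simp; omega
  · intro i h1 h2
    rcases Nat.lt_or_ge i (b - a) with hi | hi
    · rw [List.getElem_append_left (by simpa using hi)]
      simp
    · rw [List.getElem_append_right (by simpa using hi)]
      simp only [seg_getElem, seg_length]
      congr 1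
      omega

lemma pref_append_seg (G : ℕ → Γ) {a b : ℕ} (hab : a ≤ b) :
    pref G a ++ seg G a b = pref G b := by
  rw [pref_eq_seg, pref_eq_seg]
  exact seg_append G (Nat.zero_le a) hab

lemma pref_eq_of (G : ℕ → Γ) (l : List Γ) (hl : ∀ i (hi : i < l.length), G i = l[i]) :
    pref G l.length = l := by
  apply List.ext_getElem (by simp)
  intro i h1 h2
  simp [hl i h2]

lemma seg_mem_of (G : ℕ → Γ) {A : Set Γ} (hG : ∀ i, G i ∈ A) (a b : ℕ) :
    ∀ x ∈ seg G a b, x ∈ A := by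
  intro x hx
  simp only [seg, List.mem_map] at hx
  obtain ⟨i, _, rfl⟩ := hx
  exact hG _

lemma seg_shift (G : ℕ → Γ) (k a b : ℕ) :
    seg (fun i => G (k + i)) a b = seg G (k + a) (k + b) := by
  simp only [seg, show k + b - (k + a) = b - a by omega]
  exact congrArg (fun φ => List.map φ (List.range (b - a)))
    (funext fun i => congrArg G (Nat.add_assoc k a i).symm)

lemma mem_seg_of_pos (G : ℕ → Γ) {a b m : ℕ} (h1 : a ≤ m) (h2 : m < b) :
    G m ∈ seg G a b := by
  simp only [seg, List.mem_map]
  exact ⟨m - a, by simp [List.mem_range]; omega, by congr 1; omega⟩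

end DAProof


namespace DAProof

lemma pigeon {N : Type} [Finite N] (c : ℕ → N) : ∃ e, {n | c n = e}.Infinite := by
  obtain ⟨e, he⟩ := Finite.exists_infinite_fiber c
  exact ⟨e, Set.infinite_coe_iff.mp he⟩

lemma pigeon_on {N : Type} [Finite N] {S : Set ℕ} (hS : S.Infinite) (c : ℕ → N) :
    ∃ e, {n | n ∈ S ∧ c n = e}.Infinite := by
  haveI := hS.to_subtype
  obtain ⟨e, he⟩ := Finite.exists_infinite_fiber (fun x : S => c x.1)
  rw [Set.infinite_coe_iff] at he
  refine ⟨e, Set.Infinite.mono ?_ (he.image Subtype.val_injective.injOn)⟩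
  rintro x ⟨⟨y, hy⟩, hy2, rfl⟩
  exact ⟨hy, by simpa using hy2⟩

theorem ramsey_pairs {N : Type} [Finite N] (c : ℕ → ℕ → N) :
    ∃ t : ℕ → ℕ, StrictMono t ∧ ∃ e, ∀ i j, i < j → c (t i) (t j) = e := by
  have key : ∀ S : Set ℕ, S.Infinite → ∃ (S' : Set ℕ) (m : N),
      S'.Infinite ∧ S' ⊆ S ∧ (∀ x ∈ S', sInf S < x) ∧ (∀ x ∈ S', c (sInf S) x = m) := by
    intro S hS
    have hT : {n | n ∈ S ∧ sInf S < n}.Infinite := by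
      have := hS.diff (Set.finite_Iic (sInf S))
      refine this.mono ?_
      rintro x ⟨hx1, hx2⟩
      exact ⟨hx1, by simpa using hx2⟩
    obtain ⟨m, hm⟩ := pigeon_on hT (c (sInf S))
    refine ⟨_, m, hm, ?_, ?_, ?_⟩
    · rintro x ⟨⟨hx, _⟩, _⟩; exact hx
    · rintro x ⟨⟨_, hx⟩, _⟩; exact hx
    · rintro x ⟨_, hx⟩; exact hx
  choose F m hInf hSub hGt hCol using key
  let g : ℕ → {S : Set ℕ // S.Infinite} := fun n =>
    Nat.rec ⟨Set.univ, Set.infinite_univ⟩ (fun _ p => ⟨F p.1 p.2, hInf p.1 p.2⟩) n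
  have hg : ∀ n, g (n + 1) = ⟨F (g n).1 (g n).2, hInf _ _⟩ := fun n => rfl
  let a : ℕ → ℕ := fun n => sInf (g n).1
  have hmem : ∀ n, a n ∈ (g n).1 := fun n => Nat.sInf_mem (g n).2.nonempty
  have hnext : ∀ n, a (n + 1) ∈ F (g n).1 (g n).2 := fun n => by
    have := hmem (n + 1); rwa [hg n] at this
  have hamono : StrictMono a := strictMono_nat_of_lt_succ fun n => hGt _ _ _ (hnext n)
  have hnested : ∀ i j, i + 1 ≤ j → (g j).1 ⊆ F (g i).1 (g i).2 := by
    intro i j hij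
    induction j with
    | zero => omega
    | succ j ih =>
      rcases Nat.lt_or_ge (i + 1) (j + 1) with hlt | hge
      · rw [hg j]
        exact fun x hx => ih (by omega) (hSub _ _ hx)
      · have : i = j := by omega
        subst this; rw [hg i]
  have hcol : ∀ i j, i < j → c (a i) (a j) = m (g i).1 (g i).2 := by
    intro i j hij
    exact hCol _ _ _ (hnested i j hij (hmem j))
  obtain ⟨e, he⟩ := pigeon (fun n => m (g n).1 (g n).2)
  have he' : {n | m (g n).1 (g n).2 = e}.Infinite := he
  refine ⟨fun k => a (Nat.nth _ k), hamono.comp (Nat.nth_strictMono he'), e, ?_⟩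
  intro i j hij
  rw [hcol _ _ (Nat.nth_strictMono he' hij)]
  exact Nat.nth_mem_of_infinite he' i

end DAProof
namespace DAProof
open InfWords

variable {Γ M : Type} [Monoid M] {h : List Γ → M}

lemma hseg_mul (hhom : IsHom h) (G : ℕ → Γ) {a b c : ℕ} (hab : a ≤ b) (hbc : b ≤ c) :
    h (seg G a b) * h (seg G b c) = h (seg G a c) := by
  rw [← hhom.map_mul, seg_append G hab hbc]

theorem ramsey_factor [Finite M] (hhom : IsHom h) (G : ℕ → Γ) :
    ∃ (t : ℕ → ℕ) (e : M), StrictMono t ∧ (∀ i j, i < j → h (seg G (t i) (t j)) = e) ∧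
      e * e = e := by
  obtain ⟨t, ht, e, he⟩ := ramsey_pairs (fun i j => h (seg G i j))
  refine ⟨t, e, ht, he, ?_⟩
  have h01 := he 0 1 (by omega)
  have h12 := he 1 2 (by omega)
  have h02 := he 0 2 (by omega)
  calc e * e = h (seg G (t 0) (t 1)) * h (seg G (t 1) (t 2)) := by rw [h01, h12]
  _ = h (seg G (t 0) (t 2)) := hseg_mul hhom G (ht (by omega)).le (ht (by omega)).le
  _ = e := h02

lemma isPre_pref (G : ℕ → Γ) (m : ℕ) : IsPre (pref G m) (Sum.inr G) := by
  intro i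
  rw [List.get_eq_getElem]
  exact pref_getElem G m i.1 i.2

@[simp] lemma partialProd_zero (u : List Γ) (v : ℕ → List Γ) : partialProd u v 0 = u := by
  simp [partialProd]

lemma partialProd_succ (u : List Γ) (v : ℕ → List Γ) (n : ℕ) :
    partialProd u v (n + 1) = partialProd u v n ++ v n := by
  simp [partialProd, List.range_succ]

omit [Monoid M] in
theorem cuts_mem (G : ℕ → Γ) {t : ℕ → ℕ} (ht : StrictMono t) {e : M}
    (hb : ∀ i, h (seg G (t i) (t (i + 1))) = e) :
    Sum.inr G ∈ pairSet h (h (pref G (t 0))) e := by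
  have hpp : ∀ n, partialProd (pref G (t 0)) (fun i => seg G (t i) (t (i + 1))) n
      = pref G (t n) := by
    intro n
    induction n with
    | zero => simp
    | succ n ih =>
      rw [partialProd_succ, ih, pref_append_seg G (ht.monotone (Nat.le_succ n))]
  refine ⟨_, _, rfl, hb, fun n => ?_, fun k => ?_⟩
  · rw [hpp]; exact isPre_pref G (t n)
  · refine ⟨k + 1, ?_⟩
    rw [hpp, pref_length]
    calc k < k + 1 := Nat.lt_succ_self k
    _ ≤ t (k + 1) := ht.le_apply

end DAProof
namespace DAProof
open InfWords

variable {Γ M : Type} [Monoid M] {h : List Γ → M}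

lemma flatten_replicate_length (n : ℕ) (z : List Γ) :
    ((List.replicate n z).flatten).length = n * z.length := by
  induction n with
  | zero => simp
  | succ n ih => simp [List.replicate_succ, ih, Nat.succ_mul, Nat.add_comm]

lemma rot_pow (n : ℕ) (z₁ z₂ : List Γ) :
    z₁ ++ (List.replicate n (z₂ ++ z₁)).flatten
      = (List.replicate n (z₁ ++ z₂)).flatten ++ z₁ := by
  induction n with
  | zero => simp
  | succ n ih =>
    simp only [List.replicate_succ, List.flatten_cons, List.append_assoc]
    rw [ih]

lemma omegaPow_eq (z : List Γ) (hz : z ≠ []) (hlen : 0 < z.length) :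
    omegaPow z = Sum.inr (fun n => z[n % z.length]'(Nat.mod_lt n hlen)) := by
  cases z with
  | nil => simp at hz
  | cons a l => rfl

theorem omega_mem (hhom : IsHom h) (x z₁ z₂ : List Γ) (hz : z₁ ++ z₂ ≠ []) :
    wappend x (omegaPow (z₁ ++ z₂)) ∈ pairSet h (h (x ++ z₁)) (h (z₂ ++ z₁)) := by
  set z := z₁ ++ z₂ with hzdef
  have hlen : 0 < z.length := List.length_pos_iff.mpr hz
  set ζ : ℕ → Γ := fun n => z[n % z.length]'(Nat.mod_lt n hlen) with hζ
  rw [omegaPow_eq z hz hlen]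
  set GX : ℕ → Γ :=
    fun n => if hn : n < x.length then x.get ⟨n, hn⟩ else ζ (n - x.length) with hGX
  have hw : wappend x (Sum.inr ζ) = Sum.inr GX := rfl
  rw [hw]
  have hper : ∀ i, ζ (z.length + i) = ζ i := by
    intro i; simp only [hζ, Nat.add_mod_left]
  have hb : pref ζ z.length = z := by
    apply pref_eq_of
    intro i hi
    simp only [hζ]
    congr 1
    exact Nat.mod_eq_of_lt hi
  have hc : pref ζ z₁.length = z₁ := by
    apply pref_eq_of
    intro i hi
    have hiz : i < z.length := by
      rw [hzdef]; simp; omega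
    simp only [hζ, Nat.mod_eq_of_lt hiz]
    exact List.getElem_append_left hi
  have hd : ∀ r, pref ζ (z.length + r) = z ++ pref ζ r := by
    intro r
    rw [← pref_append_seg ζ (Nat.le_add_right _ _), hb]
    congr 1
    simp only [seg, Nat.add_sub_cancel_left, pref]
    exact congrArg (fun φ => List.map φ (List.range r)) (funext hper)
  have he : ∀ n, pref ζ (n * z.length + z₁.length)
      = (List.replicate n z).flatten ++ z₁ := by
    intro n
    induction n with
    | zero => simpa using hc
    | succ n ih =>
      have : (n + 1) * z.length + z₁.length = z.length + (n * z.length + z₁.length) := by ring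
      rw [this, hd, ih]
      simp [List.replicate_succ, List.flatten_cons, List.append_assoc]
  have hf : pref GX x.length = x := by
    apply pref_eq_of
    intro i hi
    simp only [hGX, dif_pos hi, List.get_eq_getElem]
  have hg : ∀ r, pref GX (x.length + r) = x ++ pref ζ r := by
    intro r
    rw [← pref_append_seg GX (Nat.le_add_right _ _), hf]
    congr 1
    simp only [seg, Nat.add_sub_cancel_left, pref]
    refine congrArg (fun φ => List.map φ (List.range r)) (funext fun i => ?_)
    simp only [hGX, dif_neg (by omega : ¬ x.length + i < x.length), Nat.add_sub_cancel_left]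
  have hpp : ∀ n, partialProd (x ++ z₁) (fun _ => z₂ ++ z₁) n
      = pref GX (x.length + (n * z.length + z₁.length)) := by
    intro n
    have hmapc : (List.range n).map (fun _ => (z₂ ++ z₁)) = List.replicate n (z₂ ++ z₁) := by
      have := List.map_const (l := List.range n) (b := z₂ ++ z₁)
      simpa using this
    rw [hg, he]
    simp only [partialProd, hmapc, List.append_assoc]
    rw [rot_pow]
  refine ⟨x ++ z₁, fun _ => z₂ ++ z₁, rfl, fun _ => rfl, fun n => ?_, fun k => ?_⟩
  · rw [hpp n]; exact isPre_pref GX _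
  · refine ⟨k + 1, ?_⟩
    rw [hpp (k + 1), pref_length]
    have : (k + 1) * 1 ≤ (k + 1) * z.length := Nat.mul_le_mul_left _ hlen
    omega

end DAProof
namespace DAProof
open InfWords

variable {Γ M : Type} [Monoid M]

@[simp] lemma alph_inr (f : ℕ → Γ) : alph (Sum.inr f) = {a | ∃ n, f n = a} := rfl
@[simp] lemma alph_inl (l : List Γ) : alph (Sum.inl l) = {a | a ∈ l} := rfl
@[simp] lemma im_inr (f : ℕ → Γ) : im (Sum.inr f) = {a | ∀ n, ∃ m, n ≤ m ∧ f m = a} := rfl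
@[simp] lemma im_inl (l : List Γ) : im (Sum.inl l) = (∅ : Set Γ) := rfl

lemma wappend_shift (G : ℕ → Γ) (m : ℕ) (l : List Γ) (hl : l = pref G m) :
    wappend l (Sum.inr (fun i => G (m + i))) = Sum.inr G := by
  subst hl
  show Sum.inr _ = Sum.inr G
  congr 1
  funext n
  by_cases hn : n < (pref G m).length
  · rw [dif_pos hn, List.get_eq_getElem, pref_getElem]
  · rw [dif_neg hn]
    have hn' : m ≤ n := by rw [pref_length] at hn; omega
    show G (m + (n - (pref G m).length)) = G n
    rw [pref_length]
    congr 1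
    omega

theorem transfer {h : List Γ → M} {L : Set (Word Γ)}
    (hrec : StronglyRecognizes h L) {s e : M} (hl : LinkedPair s e) {x y : Word Γ}
    (hx : x ∈ pairSet h s e) (hy : y ∈ pairSet h s e) (hxL : x ∈ L) : y ∈ L := by
  have hsub : pairSet h s e ⊆ L := by
    intro w hw
    rw [hrec]
    exact Set.mem_iUnion.2 ⟨s, Set.mem_iUnion.2 ⟨e, Set.mem_iUnion.2 ⟨⟨hl, x, hx, hxL⟩, hw⟩⟩⟩
  exact hsub hy

theorem pack [Finite M] (hDA : IsDA M) {h : List Γ → M}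
    (hhom : IsHom h) (A : Set Γ) (G : ℕ → Γ) (hGA : ∀ i, G i ∈ A)
    (hocc : ∀ a ∈ A, ∀ n, ∃ m, n ≤ m ∧ G m = a) :
    ∃ (t : ℕ → ℕ) (f : M), StrictMono t ∧ (∀ i j, i < j → h (seg G (t i) (t j)) = f) ∧
      f * f = f ∧ (∀ c : List Γ, (∀ b ∈ c, b ∈ A) → f * h c * f = f) := by
  obtain ⟨t, f, ht, hsg, hff⟩ := ramsey_factor hhom G
  refine ⟨t, f, ht, hsg, hff, ?_⟩
  have hfac : ∀ a ∈ A, ∃ x y : M, x * h [a] * y = f := by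
    intro a ha
    obtain ⟨m, hm1, hm2⟩ := hocc a ha (t 0)
    have hexists : ∃ j, m < t j :=
      ⟨m + 1, lt_of_lt_of_le (Nat.lt_succ_self m) ht.le_apply⟩
    set j := Nat.find hexists with hj
    have hjs : m < t j := Nat.find_spec hexists
    have hj0 : j ≠ 0 := by
      intro hj0
      rw [hj0] at hjs
      omega
    have hile : t (j - 1) ≤ m := by
      have := Nat.find_min hexists (m := j - 1) (by omega)
      omega
    have hmem : a ∈ seg G (t (j - 1)) (t j) := by
      rw [← hm2]
      exact mem_seg_of_pos G hile hjs
    obtain ⟨l₁, l₂, hsplit⟩ := List.append_of_mem hmem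
    have hval : h (seg G (t (j - 1)) (t j)) = f := hsg (j - 1) j (by omega)
    refine ⟨h l₁, h l₂, ?_⟩
    rw [← hval, hsplit]
    rw [show l₁ ++ a :: l₂ = (l₁ ++ [a]) ++ l₂ by simp, hhom.map_mul, hhom.map_mul]
  have hmsub : ∀ c : List Γ, (∀ b ∈ c, b ∈ A) → h c ∈ Msub f := by
    intro c
    induction c with
    | nil => intro _; rw [hhom.map_one]; exact Submonoid.one_mem _
    | cons a c ih =>
      intro hc
      rw [show (a :: c) = [a] ++ c from rfl, hhom.map_mul]
      refine Submonoid.mul_mem _ (Submonoid.subset_closure ?_) (ih fun b hb => hc b (by simp [hb]))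
      exact hfac a (hc a (by simp))
  exact fun c hc => hDA f hff (h c) (hmsub c hc)

end DAProof
namespace DAProof
open InfWords

set_option maxHeartbeats 1000000 in
theorem key_lemma {Γ M : Type} [Fintype Γ] [Monoid M] [Finite M] (hDA : IsDA M)
    {h : List Γ → M} (hhom : IsHom h) {L : Set (Word Γ)}
    (hrec : StronglyRecognizes h L) (α : Word Γ) :
    ∃ w A, α ∈ wappend w '' cpx A ∧ ∀ γ ∈ wappend w '' cpx A, (γ ∈ L ↔ α ∈ L) := by
  cases α with
  | inl u =>
    have hnil : (Sum.inl [] : Word Γ) ∈ cpx (∅ : Set Γ) := by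
      constructor
      · ext a; simp
      · rfl
    refine ⟨u, ∅, ⟨Sum.inl [], hnil, by simp [wappend]⟩, ?_⟩
    rintro γ ⟨β, ⟨hba, hbi⟩, rfl⟩
    have hβ : β = Sum.inl [] := by
      cases β with
      | inl l =>
        congr 1
        rw [List.eq_nil_iff_forall_not_mem]
        intro a hal
        have : a ∈ alph (Sum.inl l) := hal
        rw [hba] at this
        exact this
      | inr f =>
        exfalso
        have : f 0 ∈ alph (Sum.inr f) := ⟨0, rfl⟩
        rw [hba] at this
        exact this
    subst hβ
    show wappend u (Sum.inl []) ∈ L ↔ Sum.inl u ∈ L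
    simp [wappend]
  | inr F =>
    set A : Set Γ := im (Sum.inr F) with hA
    have hAocc : ∀ a ∈ A, ∀ n, ∃ m, n ≤ m ∧ F m = a := fun a ha => ha
    have hbnd : ∀ a : Γ, ∃ kb, a ∉ A → ∀ m, kb ≤ m → F m ≠ a := by
      intro a
      by_cases ha : a ∈ A
      · exact ⟨0, fun h' => absurd ha h'⟩
      · have ha' : ¬ ∀ n, ∃ m, n ≤ m ∧ F m = a := ha
        push_neg at ha'
        obtain ⟨n, hn⟩ := ha'
        exact ⟨n, fun _ m hm => hn m hm⟩
    choose bnd hbnd using hbnd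
    set k := Finset.univ.sup bnd with hk
    have hkA : ∀ m, k ≤ m → F m ∈ A := by
      intro m hm
      by_contra hFm
      exact hbnd (F m) hFm m (le_trans (Finset.le_sup (Finset.mem_univ (F m))) hm) rfl
    set δ : ℕ → Γ := fun i => F (k + i) with hδ
    have hδA : ∀ i, δ i ∈ A := fun i => hkA _ (Nat.le_add_right _ _)
    have hδocc : ∀ a ∈ A, ∀ n, ∃ m, n ≤ m ∧ δ m = a := by
      intro a ha n
      obtain ⟨m, hm1, hm2⟩ := hAocc a ha (k + n)
      refine ⟨m - k, by omega, ?_⟩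
      show F (k + (m - k)) = a
      rw [show k + (m - k) = m by omega]
      exact hm2
    obtain ⟨t, f, ht, hsegf, hff, habsf⟩ := pack hDA hhom A δ hδA hδocc
    set w : List Γ := pref F (k + t 1) with hw
    have hwlen : w.length = k + t 1 := pref_length F _
    have hsegδ : ∀ a b : ℕ, seg δ a b = seg F (k + a) (k + b) := fun a b => seg_shift F k a b
    have hblock : ∀ i j, i < j → h (seg F (k + t i) (k + t j)) = f := by
      intro i j hij
      rw [← hsegδ]
      exact hsegf i j hij
    have hwsplit : h w = h (pref F (k + t 0)) * f := by
      have hle : k + t 0 ≤ k + t 1 := by have := ht Nat.zero_lt_one; omega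
      have h1 : pref F (k + t 0) ++ seg F (k + t 0) (k + t 1) = pref F (k + t 1) :=
        pref_append_seg F hle
      calc h w = h (pref F (k + t 0) ++ seg F (k + t 0) (k + t 1)) := by rw [hw, h1]
      _ = h (pref F (k + t 0)) * f := by rw [hhom.map_mul, hblock 0 1 Nat.zero_lt_one]
    have hsf : h w * f = h w := by
      rw [hwsplit, mul_assoc, hff]
    -- α ∈ w · cpx A
    have hαmem : Sum.inr F ∈ wappend w '' cpx A := by
      refine ⟨Sum.inr (fun i => F ((k + t 1) + i)), ⟨?_, ?_⟩, wappend_shift F (k + t 1) w hw⟩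
      · apply Set.Subset.antisymm
        · rintro a ⟨n, rfl⟩
          exact hkA _ (by omega)
        · intro a ha
          obtain ⟨m, hm1, hm2⟩ := hAocc a ha (k + t 1)
          refine ⟨m - (k + t 1), ?_⟩
          show F (k + t 1 + (m - (k + t 1))) = a
          rw [show k + t 1 + (m - (k + t 1)) = m by omega]
          exact hm2
      · apply Set.Subset.antisymm
        · intro a ha n
          obtain ⟨m, hm1, hm2⟩ := ha n
          exact ⟨k + t 1 + m, by omega, hm2⟩
        · intro a ha n
          obtain ⟨m, hm1, hm2⟩ := hAocc a ha (k + t 1 + n)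
          refine ⟨m - (k + t 1), by omega, ?_⟩
          show F (k + t 1 + (m - (k + t 1))) = a
          rw [show k + t 1 + (m - (k + t 1)) = m by omega]
          exact hm2
    refine ⟨w, A, hαmem, ?_⟩
    rintro γ ⟨β', ⟨hbal, hbim⟩, rfl⟩
    have hAne : A.Nonempty := by
      obtain ⟨a, hainf⟩ := pigeon F
      refine ⟨a, fun n => ?_⟩
      obtain ⟨m, hm, hlt⟩ := hainf.exists_gt n
      exact ⟨m, hlt.le, hm⟩
    obtain ⟨β, rfl⟩ : ∃ β, β' = Sum.inr β := by
      cases β' with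
      | inl l =>
        exfalso
        obtain ⟨a, ha⟩ := hAne
        rw [← hbim] at ha
        exact ha
      | inr β => exact ⟨β, rfl⟩
    have hβA : ∀ i, β i ∈ A := by
      intro i
      rw [← hbal]
      exact ⟨i, rfl⟩
    have hβocc : ∀ a ∈ A, ∀ n, ∃ m, n ≤ m ∧ β m = a := by
      intro a ha
      rw [← hbim] at ha
      exact ha
    obtain ⟨t', g, ht', hsegg, hgg, habsg⟩ := pack hDA hhom A β hβA hβocc
    set B : List Γ := seg δ (t 1) (t 2) with hB
    set C : List Γ := seg β (t' 1) (t' 2) with hC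
    have hhB : h B = f := hsegf 1 2 (by omega)
    have hhC : h C = g := hsegg 1 2 (by omega)
    have hBA : ∀ b ∈ B, b ∈ A := seg_mem_of δ hδA _ _
    have hCA : ∀ b ∈ C, b ∈ A := seg_mem_of β hβA _ _
    have hBne : B ≠ [] := by
      have h1 : 0 < B.length := by
        rw [hB, seg_length]
        have := ht (show (1:ℕ) < 2 by omega)
        omega
      exact List.ne_nil_of_length_pos h1
    have hCne : C ≠ [] := by
      have h1 : 0 < C.length := by
        rw [hC, seg_length]
        have := ht' (show (1:ℕ) < 2 by omega)
        omega
      exact List.ne_nil_of_length_pos h1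
    -- algebra
    have E1 : f * (g * f) = f := by
      have h1 := habsf C hCA
      rw [hhC] at h1
      rw [← mul_assoc]
      exact h1
    have E3 : g * (f * g) = g := by
      have h1 := habsg B hBA
      rw [hhB] at h1
      rw [← mul_assoc]
      exact h1
    have E5 : h w * (g * f) = h w := by
      conv_lhs => rw [← hsf]
      rw [mul_assoc, E1, hsf]
    have E6 : (g * f) * (g * f) = g * f := by
      rw [mul_assoc g f (g * f), E1]
    have E7 : (f * g) * (f * g) = f * g := by
      rw [mul_assoc f g (f * g), E3]
    have hsgg : (h w * g) * g = h w * g := by rw [mul_assoc, hgg]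
    have hsgfg : (h w * g) * (f * g) = h w * g := by rw [mul_assoc, E3]
    have lp1 : LinkedPair (h w) f := ⟨hsf, hff⟩
    have lp2 : LinkedPair (h w) (g * f) := ⟨E5, E6⟩
    have lp4 : LinkedPair (h w * g) (f * g) := ⟨hsgfg, E7⟩
    have lp3 : LinkedPair (h w * g) g := ⟨hsgg, hgg⟩
    -- α ∈ P₁
    have hα1 : Sum.inr F ∈ pairSet h (h w) f := by
      have hc := cuts_mem (h := h) F (t := fun i => k + t (1 + i))
        (fun i j hij => Nat.add_lt_add_left (ht (by omega)) k)
        (e := f) (fun i => hblock (1 + i) (1 + (i + 1)) (by omega))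
      have hc' : Sum.inr F ∈ pairSet h (h (pref F (k + t 1))) f := hc
      exact hc'
    -- γ ∈ P₃
    have hγ3 : wappend w (Sum.inr β) ∈ pairSet h (h w * g) g := by
      set Gg : ℕ → Γ :=
        fun n => if hn : n < w.length then w.get ⟨n, hn⟩ else β (n - w.length) with hGg
      have hweq : wappend w (Sum.inr β) = Sum.inr Gg := rfl
      have hfun : (fun i => Gg (w.length + i)) = β := by
        funext i
        show (if hn : w.length + i < w.length then _ else β (w.length + i - w.length)) = β i
        rw [dif_neg (by omega)]
        congr 1
        omega
      have hsegGg : ∀ a b : ℕ, seg Gg (w.length + a) (w.length + b) = seg β a b := by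
        intro a b
        rw [← seg_shift Gg w.length a b, hfun]
      have hprefGg : pref Gg w.length = w := by
        apply pref_eq_of
        intro i hi
        show (if hn : i < w.length then w.get ⟨i, hn⟩ else β (i - w.length)) = w[i]
        rw [dif_pos hi, List.get_eq_getElem]
      have hblockg : ∀ i, h (seg Gg (w.length + t' (1 + i)) (w.length + t' (1 + (i + 1)))) = g := by
        intro i
        rw [hsegGg]
        exact hsegg _ _ (by omega)
      have hc := cuts_mem (h := h) Gg (t := fun i => w.length + t' (1 + i))
        (fun i j hij => Nat.add_lt_add_left (ht' (by omega)) w.length)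
        (e := g) hblockg
      have hc' : Sum.inr Gg ∈ pairSet h (h (pref Gg (w.length + t' 1))) g := hc
      have harg : h (pref Gg (w.length + t' 1)) = h w * (h (pref β (t' 0)) * g) := by
        rw [← pref_append_seg Gg (Nat.le_add_right _ _), hhom.map_mul, hprefGg]
        have h2 : seg Gg (w.length + 0) (w.length + t' 1) = seg β 0 (t' 1) := hsegGg 0 (t' 1)
        rw [Nat.add_zero] at h2
        rw [h2, show seg β 0 (t' 1) = pref β (t' 1) from (pref_eq_seg β _).symm,
          ← pref_append_seg β (ht' Nat.zero_lt_one).le, hhom.map_mul,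
          hsegg 0 1 Nat.zero_lt_one]
      have hn'A : ∀ b ∈ pref β (t' 0), b ∈ A := by
        rw [pref_eq_seg]
        exact seg_mem_of β hβA _ _
      have hcore : f * (h (pref β (t' 0)) * g) * f = f := by
        have h1 := habsf (pref β (t' 0) ++ C) (by
          intro b hb
          rcases List.mem_append.mp hb with h1 | h2
          exacts [hn'A _ h1, hCA _ h2])
        rwa [hhom.map_mul, hhC] at h1
      have hfng : f * (h (pref β (t' 0)) * g) = f * g := by
        conv_lhs => rw [← E3]
        rw [show f * (h (pref β (t' 0)) * (g * (f * g)))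
            = (f * (h (pref β (t' 0)) * g) * f) * g by simp only [mul_assoc], hcore]
      have E4 : h w * (h (pref β (t' 0)) * g) = h w * g := by
        conv_lhs => rw [← hsf]
        rw [mul_assoc, hfng, ← mul_assoc, hsf]
      rw [hweq]
      rw [harg, E4] at hc'
      exact hc'
    -- witnesses
    have hθ1 : wappend w (omegaPow (B ++ (C ++ B))) ∈ pairSet h (h w) f := by
      have h1 := omega_mem hhom w (B ++ (C ++ B)) [] (by simp [hBne])
      rw [List.append_nil, List.nil_append] at h1
      have e1 : h (w ++ (B ++ (C ++ B))) = h w := by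
        rw [hhom.map_mul, hhom.map_mul, hhom.map_mul, hhB, hhC, E1, hsf]
      have e2 : h (B ++ (C ++ B)) = f := by
        rw [hhom.map_mul, hhom.map_mul, hhB, hhC, E1]
      rwa [e1, e2] at h1
    have hθ2 : wappend w (omegaPow (B ++ (C ++ B))) ∈ pairSet h (h w) (g * f) := by
      have h1 := omega_mem hhom w B (C ++ B) (by simp [hBne])
      have e1 : h (w ++ B) = h w := by rw [hhom.map_mul, hhB, hsf]
      have e2 : h ((C ++ B) ++ B) = g * f := by
        rw [hhom.map_mul, hhom.map_mul, hhC, hhB, mul_assoc, hff]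
      rwa [e1, e2] at h1
    have hψ2 : wappend w (omegaPow (B ++ C)) ∈ pairSet h (h w) (g * f) := by
      have h1 := omega_mem hhom w B C (by simp [hBne])
      have e1 : h (w ++ B) = h w := by rw [hhom.map_mul, hhB, hsf]
      have e2 : h (C ++ B) = g * f := by rw [hhom.map_mul, hhC, hhB]
      rwa [e1, e2] at h1
    have hψ4 : wappend w (omegaPow (B ++ C)) ∈ pairSet h (h w * g) (f * g) := by
      have h1 := omega_mem hhom w (B ++ C) [] (by simp [hBne])
      rw [List.append_nil, List.nil_append] at h1
      have e1 : h (w ++ (B ++ C)) = h w * g := by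
        rw [hhom.map_mul, hhom.map_mul, hhB, hhC, ← mul_assoc, hsf]
      have e2 : h (B ++ C) = f * g := by rw [hhom.map_mul, hhB, hhC]
      rwa [e1, e2] at h1
    have hθ'4 : wappend w (omegaPow (C ++ (B ++ C))) ∈ pairSet h (h w * g) (f * g) := by
      have h1 := omega_mem hhom w C (B ++ C) (by simp [hCne])
      have e1 : h (w ++ C) = h w * g := by rw [hhom.map_mul, hhC]
      have e2 : h ((B ++ C) ++ C) = f * g := by
        rw [hhom.map_mul, hhom.map_mul, hhB, hhC, mul_assoc, hgg]
      rwa [e1, e2] at h1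
    have hθ'3 : wappend w (omegaPow (C ++ (B ++ C))) ∈ pairSet h (h w * g) g := by
      have h1 := omega_mem hhom w (C ++ (B ++ C)) [] (by simp [hCne])
      rw [List.append_nil, List.nil_append] at h1
      have e1 : h (w ++ (C ++ (B ++ C))) = h w * g := by
        rw [hhom.map_mul, hhom.map_mul, hhom.map_mul, hhC, hhB, E3]
      have e2 : h (C ++ (B ++ C)) = g := by
        rw [hhom.map_mul, hhom.map_mul, hhC, hhB, E3]
      rwa [e1, e2] at h1
    constructor
    · intro hγL
      have s1 := transfer hrec lp3 hγ3 hθ'3 hγL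
      have s2 := transfer hrec lp4 hθ'4 hψ4 s1
      have s3 := transfer hrec lp2 hψ2 hθ2 s2
      exact transfer hrec lp1 hθ1 hα1 s3
    · intro hαL
      have s1 := transfer hrec lp1 hα1 hθ1 hαL
      have s2 := transfer hrec lp2 hθ2 hψ2 s1
      have s3 := transfer hrec lp4 hψ4 hθ'4 s2
      exact transfer hrec lp3 hθ'3 hγ3 s3

end DAProof
namespace DAProof
open InfWords

lemma open_of_basics {Γ : Type} (S : Set (Word Γ))
    (hS : ∀ α ∈ S, ∃ w A, α ∈ wappend w '' cpx A ∧ wappend w '' cpx A ⊆ S) :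
    @IsOpen _ (strictTopo Γ) S := by
  have heq : S = ⋃₀ {U | (∃ u A, U = wappend u '' cpx A) ∧ U ⊆ S} := by
    apply Set.Subset.antisymm
    · intro α hα
      obtain ⟨w, A, hmem, hsub⟩ := hS α hα
      exact ⟨_, ⟨⟨w, A, rfl⟩, hsub⟩, hmem⟩
    · rintro α ⟨U, ⟨_, hUS⟩, hαU⟩
      exact hUS hαU
  rw [heq]
  exact TopologicalSpace.GenerateOpen.sUnion _
    (fun U hU => TopologicalSpace.GenerateOpen.basic U hU.1)

end DAProof

theorem da_strongly_recognized_clopen_strict (Γ : Type) [Fintype Γ] (M : Type)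
    [Monoid M] [Finite M] (hDA : InfWords.IsDA M)
    (h : List Γ → M) (hhom : InfWords.IsHom h) (hsurj : Function.Surjective h)
    (L : Set (InfWords.Word Γ)) (hrec : InfWords.StronglyRecognizes h L) :
    @IsClopen _ (InfWords.strictTopo Γ) L := by
  refine ⟨@IsClosed.mk _ (InfWords.strictTopo Γ) L ?_, ?_⟩
  · refine DAProof.open_of_basics _ (fun α hα => ?_)
    obtain ⟨w, A, hmem, hiff⟩ := DAProof.key_lemma hDA hhom hrec α
    exact ⟨w, A, hmem, fun γ hγ hγL => hα ((hiff γ hγ).mp hγL)⟩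
  · refine DAProof.open_of_basics _ (fun α hα => ?_)
    obtain ⟨w, A, hmem, hiff⟩ := DAProof.key_lemma hDA hhom hrec α
    exact ⟨w, A, hmem, fun γ hγ => (hiff γ hγ).mpr hα⟩
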